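/- Let G be a d-connected graph and fix an ordered pair of vertices u, v. On the set of (u,v)-separating d-separators of G, define S ⪯ T if T−S lies in the same component of G−S as v. Then ⪯ is a partial order, and two (u,v)-separating d-separators are comparable in this order if and only if they are noncrossing. -/

import Mathlib

variable {V : Type*}

/-- `u` and `v` lie in the same component of `G − S`. -/
def ReachOutside (G : SimpleGraph V) (S : Set V) (u v : V) : Prop :=
  ∃ (hu : u ∈ Sᶜ) (hv : v ∈ Sᶜ), (G.induce Sᶜ).Reachable ⟨u, hu⟩ ⟨v, hv⟩

/-- `S` is a separator of `G`: `G − S` is disconnected. -/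
def IsSeparator (G : SimpleGraph V) (S : Set V) : Prop :=
  ∃ u v, u ∉ S ∧ v ∉ S ∧ ¬ ReachOutside G S u v

/-- `S` is a `d`-separator of `G`. -/
def IsdSeparator (G : SimpleGraph V) (d : ℕ) (S : Set V) : Prop :=
  S.ncard = d ∧ IsSeparator G S

/-- `S` separates `u` from `v` in `G`. -/
def SeparatesPair (G : SimpleGraph V) (S : Set V) (u v : V) : Prop :=
  u ∉ S ∧ v ∉ S ∧ ¬ ReachOutside G S u v

/-- `S` crosses `T`: `S` contains vertices of at least two components of `G − T`. -/
def Crosses (G : SimpleGraph V) (S T : Set V) : Prop :=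
  ∃ s₁ s₂, s₁ ∈ S ∧ s₂ ∈ S ∧ s₁ ∉ T ∧ s₂ ∉ T ∧ ¬ ReachOutside G T s₁ s₂

def Noncrossing (G : SimpleGraph V) (S T : Set V) : Prop :=
  ¬ Crosses G S T ∧ ¬ Crosses G T S

/-- `G` is `d`-connected. -/
def dConnected [Fintype V] (G : SimpleGraph V) (d : ℕ) : Prop :=
  d + 1 ≤ Fintype.card V ∧ ∀ S : Set V, S.ncard < d → ¬ IsSeparator G S

/-- the neighbours of `X` outside `X`. -/
def nbhd (G : SimpleGraph V) (X : Set V) : Set V :=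
  {v | v ∉ X ∧ ∃ x ∈ X, G.Adj x v}

/-- the complement `V − X − N_G(X)` of a fragment. -/
def fragCompl (G : SimpleGraph V) (X : Set V) : Set V :=
  (X ∪ nbhd G X)ᶜ

/-- `X` is a `d`-fragment of `G`. -/
def IsFragment (G : SimpleGraph V) (d : ℕ) (X : Set V) : Prop :=
  X.Nonempty ∧ (nbhd G X).ncard = d ∧ (fragCompl G X).Nonempty

/-- the fragment `X` is `(u,v)`-separating. -/
def FragSeparates (G : SimpleGraph V) (X : Set V) (u v : V) : Prop :=
  (u ∈ X ∧ v ∈ fragCompl G X) ∨ (v ∈ X ∧ u ∈ fragCompl G X)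

/-- there exist `k` pairwise internally disjoint `u`–`v` paths in `G`. -/
def HasIntDisjPaths (G : SimpleGraph V) (u v : V) (k : ℕ) : Prop :=
  ∃ f : Fin k → G.Path u v, Function.Injective f ∧
    ∀ i j, i ≠ j → ∀ x, x ∈ (f i).1.support → x ∈ (f j).1.support → x = u ∨ x = v

/-- `κ(G,u,v)`: the maximum number of pairwise internally disjoint `u`–`v` paths. -/
noncomputable def localConn (G : SimpleGraph V) (u v : V) : ℕ :=
  sSup {k | HasIntDisjPaths G u v k}

section Helpers


variable {G : SimpleGraph V} {S T : Set V} {a b c u v : V}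

private lemma walk_rtg {s : Set V} {x y : s} (w : (SimpleGraph.induce s G).Walk x y) :
    Relation.ReflTransGen (fun a b : V => G.Adj a b ∧ b ∈ s) x.1 y.1 := by
  induction w with
  | nil => exact Relation.ReflTransGen.refl
  | @cons x z y h p ih => exact Relation.ReflTransGen.head ⟨h, z.2⟩ ih

private lemma rtg_reach (ha : a ∉ S)
    (h : Relation.ReflTransGen (fun x y : V => G.Adj x y ∧ y ∉ S) a b) :
    ReachOutside G S a b := by
  induction h with
  | refl => exact ⟨ha, ha, SimpleGraph.Reachable.refl _⟩
  | @tail b c hab hbc ih =>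
    obtain ⟨h1, hb, hr⟩ := ih
    exact ⟨ha, hbc.2, hr.trans (SimpleGraph.Adj.reachable (by exact hbc.1))⟩

lemma reach_iff : ReachOutside G S a b ↔
    a ∉ S ∧ Relation.ReflTransGen (fun x y : V => G.Adj x y ∧ y ∉ S) a b := by
  constructor
  · rintro ⟨ha, hb, hr⟩
    exact ⟨ha, by obtain ⟨w⟩ := hr; exact walk_rtg w⟩
  · rintro ⟨ha, h⟩
    exact rtg_reach ha h

lemma reach_left (h : ReachOutside G S a b) : a ∉ S := h.1
lemma reach_right (h : ReachOutside G S a b) : b ∉ S := h.2.1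

lemma reach_refl (ha : a ∉ S) : ReachOutside G S a a := ⟨ha, ha, SimpleGraph.Reachable.refl _⟩

lemma reach_symm (h : ReachOutside G S a b) : ReachOutside G S b a := by
  obtain ⟨ha, hb, hr⟩ := h; exact ⟨hb, ha, hr.symm⟩

lemma reach_trans (h1 : ReachOutside G S a b) (h2 : ReachOutside G S b c) :
    ReachOutside G S a c := by
  obtain ⟨ha, hb, hr1⟩ := h1
  obtain ⟨hb', hc, hr2⟩ := h2
  exact ⟨ha, hc, hr1.trans hr2⟩

lemma reach_adj (ha : a ∉ S) (hb : b ∉ S) (hab : G.Adj a b) : ReachOutside G S a b :=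
  ⟨ha, hb, SimpleGraph.Adj.reachable (by exact hab)⟩

/-- Transfer: if every vertex reachable from `a` outside `S` avoids `T`,
then reachability outside `S` implies reachability outside `T`. -/
lemma reach_transfer (H : ∀ x, ReachOutside G S a x → x ∉ T)
    (h : ReachOutside G S a b) : ReachOutside G T a b := by
  rw [reach_iff] at h ⊢
  obtain ⟨ha, hr⟩ := h
  refine ⟨H a (reach_refl ha), ?_⟩
  have : ∀ {x : V}, Relation.ReflTransGen (fun x y : V => G.Adj x y ∧ y ∉ S) a x →
      Relation.ReflTransGen (fun x y : V => G.Adj x y ∧ y ∉ T) a x := by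
    intro x hx
    induction hx with
    | refl => exact .refl
    | @tail p q hap hpq ih =>
        exact ih.tail ⟨hpq.1, H q (rtg_reach ha (hap.tail hpq))⟩
  exact this hr

end Helpers

lemma sep_nbhd [Fintype V] {G : SimpleGraph V} {d : ℕ} {T : Set V} {u v t : V}
    (hG : dConnected G d) (hT : IsdSeparator G d T) (hsep : SeparatesPair G T u v)
    (ht : t ∈ T) : ∃ w, G.Adj t w ∧ ReachOutside G T v w := by
  obtain ⟨hcard, _⟩ := hT
  obtain ⟨hu, hv, huv⟩ := hsep
  have hfin : T.Finite := Set.toFinite T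
  have hd : 0 < d := by
    rw [← hcard, Set.ncard_pos hfin]; exact ⟨t, ht⟩
  have hT' : (T \ {t}).ncard < d := by
    rw [Set.ncard_diff_singleton_of_mem ht, hcard]
    omega
  have hreach : ReachOutside G (T \ {t}) u v := by
    by_contra h
    exact hG.2 _ hT' ⟨u, v, fun hh => hu hh.1, fun hh => hv hh.1, h⟩
  have main : ∀ x : V, Relation.ReflTransGen (fun a b : V => G.Adj a b ∧ b ∉ T \ {t}) v x →
      ReachOutside G T v x ∨ ∃ w, G.Adj t w ∧ ReachOutside G T v w := by
    intro x hx
    induction hx with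
    | refl => exact Or.inl (reach_refl hv)
    | @tail p q hvp hpq ih =>
      rcases ih with h | h
      · by_cases hq : q ∈ T
        · have hqt : q = t := by
            by_contra hne
            exact hpq.2 ⟨hq, by simpa using hne⟩
          exact Or.inr ⟨p, (hqt ▸ hpq.1).symm, h⟩
        · exact Or.inl (reach_trans h (reach_adj (reach_right h) hq hpq.1))
      · exact Or.inr h
  rcases main u ((reach_iff.mp (reach_symm hreach)).2) with h | h
  · exact absurd (reach_symm h) huv
  · exact h

theorem stmt1 [Fintype V] (G : SimpleGraph V) (d : ℕ) (u v : V) (hG : dConnected G d) :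
    -- reflexivity
    (∀ S : Set V, IsdSeparator G d S → SeparatesPair G S u v →
      ∀ w ∈ S \ S, ReachOutside G S w v) ∧
    -- antisymmetry
    (∀ S T : Set V, IsdSeparator G d S → SeparatesPair G S u v →
      IsdSeparator G d T → SeparatesPair G T u v →
      (∀ w ∈ T \ S, ReachOutside G S w v) → (∀ w ∈ S \ T, ReachOutside G T w v) → S = T) ∧
    -- transitivity
    (∀ S T U : Set V, IsdSeparator G d S → SeparatesPair G S u v →
      IsdSeparator G d T → SeparatesPair G T u v →
      IsdSeparator G d U → SeparatesPair G U u v →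
      (∀ w ∈ T \ S, ReachOutside G S w v) → (∀ w ∈ U \ T, ReachOutside G T w v) →
      (∀ w ∈ U \ S, ReachOutside G S w v)) ∧
    -- comparable iff noncrossing
    (∀ S T : Set V, IsdSeparator G d S → SeparatesPair G S u v →
      IsdSeparator G d T → SeparatesPair G T u v →
      (((∀ w ∈ T \ S, ReachOutside G S w v) ∨ (∀ w ∈ S \ T, ReachOutside G T w v)) ↔
        Noncrossing G S T)) := by
  have sepSymm : ∀ (S : Set V), SeparatesPair G S u v → SeparatesPair G S v u := by
    rintro S ⟨h1, h2, h3⟩; exact ⟨h2, h1, fun h => h3 (reach_symm h)⟩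
  have cu_avoid : ∀ S T : Set V, SeparatesPair G S u v →
      (∀ w ∈ T \ S, ReachOutside G S w v) → ∀ x, ReachOutside G S u x → x ∉ T := by
    intro S T hsS hle x hx hxT
    exact hsS.2.2 (reach_trans hx (hle x ⟨hxT, reach_right hx⟩))
  have push : ∀ S T : Set V, IsdSeparator G d S → SeparatesPair G S u v →
      SeparatesPair G T u v → (∀ w ∈ T \ S, ReachOutside G S w v) →
      ∀ x ∈ S \ T, ReachOutside G T x u := by
    intro S T hS hsS hsT hle x hxmem
    obtain ⟨w, hadj, hw⟩ := sep_nbhd hG hS (sepSymm S hsS) hxmem.1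
    have hwT : ReachOutside G T u w := reach_transfer (cu_avoid S T hsS hle) hw
    exact reach_symm (reach_trans hwT (reach_adj (reach_right hwT) hxmem.2 hadj.symm))
  have cv_avoid : ∀ S T : Set V, IsdSeparator G d S → SeparatesPair G S u v →
      SeparatesPair G T u v → (∀ w ∈ T \ S, ReachOutside G S w v) →
      ∀ y, ReachOutside G T v y → y ∉ S := by
    intro S T hS hsS hsT hle y hy hyS
    have h := push S T hS hsS hsT hle y ⟨hyS, reach_right hy⟩
    exact hsT.2.2 (reach_trans (reach_symm h) (reach_symm hy))
  have fwd : ∀ S T : Set V, IsdSeparator G d S → SeparatesPair G S u v →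
      IsdSeparator G d T → SeparatesPair G T u v →
      (∀ w ∈ T \ S, ReachOutside G S w v) → ¬Crosses G S T ∧ ¬Crosses G T S := by
    intro S T hS hsS hT hsT hle
    constructor
    · rintro ⟨s₁, s₂, h1, h2, h3, h4, h5⟩
      exact h5 (reach_trans (push S T hS hsS hsT hle s₁ ⟨h1, h3⟩)
        (reach_symm (push S T hS hsS hsT hle s₂ ⟨h2, h4⟩)))
    · rintro ⟨t₁, t₂, h1, h2, h3, h4, h5⟩
      exact h5 (reach_trans (hle t₁ ⟨h1, h3⟩) (reach_symm (hle t₂ ⟨h2, h4⟩)))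
  refine ⟨?_, ?_, ?_, ?_⟩
  · intro S _ _ w hw
    exact absurd hw (by simp)
  · intro S T hS hsS hT hsT hST hTS
    have hsub : T ⊆ S := by
      intro t htT
      by_contra htS
      have h1 := hST t ⟨htT, htS⟩
      obtain ⟨w, hadj, hw⟩ := sep_nbhd hG hT (sepSymm T hsT) htT
      have hwS : ReachOutside G S u w := reach_transfer (cu_avoid T S hsT hTS) hw
      have h2 : ReachOutside G S u t :=
        reach_trans hwS (reach_adj (reach_right hwS) htS hadj.symm)
      exact hsS.2.2 (reach_trans h2 h1)
    exact (Set.eq_of_subset_of_ncard_le hsub (by rw [hS.1, hT.1]) (Set.toFinite S)).symm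
  · intro S T U hS hsS hT hsT hU hsU hST hTU w hw
    by_cases hwT : w ∈ T
    · exact hST w ⟨hwT, hw.2⟩
    · have h := hTU w ⟨hw.1, hwT⟩
      exact reach_symm (reach_transfer (cv_avoid S T hS hsS hsT hST) (reach_symm h))
  · intro S T hS hsS hT hsT
    constructor
    · rintro (h | h)
      · exact fwd S T hS hsS hT hsT h
      · exact ⟨(fwd T S hT hsT hS hsS h).2, (fwd T S hT hsT hS hsS h).1⟩
    · rintro ⟨hnc1, hnc2⟩
      by_contra hcon
      push_neg at hcon
      obtain ⟨⟨t₀, ht₀m, ht₀⟩, ⟨s₀, hs₀m, hs₀⟩⟩ := hcon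
      have A : ∀ y, ReachOutside G T v y → y ∉ S := by
        intro y hy hyS
        exact hnc1 ⟨s₀, y, hs₀m.1, hyS, hs₀m.2, reach_right hy,
          fun h => hs₀ (reach_trans h (reach_symm hy))⟩
      obtain ⟨w, hadj, hw⟩ := sep_nbhd hG hT hsT ht₀m.1
      have hwS : ReachOutside G S v w := reach_transfer A hw
      exact ht₀ (reach_symm (reach_trans hwS (reach_adj (reach_right hwS) ht₀m.2 hadj.symm)))
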